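/- If T : C(X,ℂ) → C(Y,ℂ) is a surjective map between the Banach algebras of continuous complex-valued functions on compact Hausdorff spaces X and Y (with supremum norms) satisfying ‖T(f+g)‖ = ‖T(f)+T(g)‖ for all f, g, then T is additive: T(f+g) = T(f) + T(g) for all f, g ∈ C(X,ℂ). -/

import Mathlib

/-- The iterated "reflection" sequence used in the Mazur–Ulam style argument. -/
noncomputable def taborSeq {G E : Type*} [AddCommGroup G] [AddCommGroup E]
    (T : G → E) (ρ : E → G) (a b : G) : ℕ → G → E
  | 0 => fun x => T a + T b - T x
  | n + 1 => fun x => taborSeq T ρ a b n (a + b - ρ (taborSeq T ρ a b n x))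

/-- Midpoint lemma: a surjective map satisfying the Fischer–Muszély equation
sends midpoints to midpoints. -/
theorem tabor_mid {G E : Type*} [AddCommGroup G] [NormedAddCommGroup E] [NormedSpace ℝ E]
    (T : G → E) (hsurj : Function.Surjective T)
    (h : ∀ f g : G, ‖T (f + g)‖ = ‖T f + T g‖)
    (a b m : G) (hm : m + m = a + b) : T a + T b = T m + T m := by
  have hdbl : ∀ e : E, ‖e + e‖ = 2 * ‖e‖ := by
    intro e
    rw [← two_smul ℝ e, norm_smul]
    simp
  have hT0 : T 0 = 0 := by
    have h1 : ‖T 0‖ = ‖T 0 + T 0‖ := by simpa using h 0 0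
    rw [hdbl] at h1
    have h2 : ‖T 0‖ = 0 := by linarith
    simpa using h2
  have hneg : ∀ x : G, T (-x) = - T x := by
    intro x
    have h1 : ‖T x + T (-x)‖ = 0 := by
      have := (h x (-x)).symm
      simpa [hT0] using this
    have h2 : T x + T (-x) = 0 := by simpa using h1
    exact eq_neg_of_add_eq_zero_right h2
  have hiso : ∀ x y : G, ‖T x - T y‖ = ‖T (x - y)‖ := by
    intro x y
    calc ‖T x - T y‖ = ‖T x + T (-y)‖ := by rw [hneg, sub_eq_add_neg]
    _ = ‖T (x + -y)‖ := (h x (-y)).symm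
    _ = ‖T (x - y)‖ := by rw [sub_eq_add_neg]
  set ρ : E → G := Function.surjInv hsurj with hρdef
  have hρ : ∀ e : E, T (ρ e) = e := fun e => Function.surjInv_eq hsurj e
  set H : ℕ → G → E := taborSeq T ρ a b with hH
  have hH0 : ∀ x : G, H 0 x = T a + T b - T x := fun x => rfl
  have hHS : ∀ n x, H (n + 1) x = H n (a + b - ρ (H n x)) := fun n x => rfl
  -- if k is an isometry for the pulled-back pseudometric, equal T-values give equal k-values
  have heq : ∀ (k : G → E), (∀ x y, ‖k x - k y‖ = ‖T x - T y‖) →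
      ∀ s t : G, ‖T (s - t)‖ = 0 → k s = k t := by
    intro k hk s t hst
    have h1 : ‖k s - k t‖ = 0 := by rw [hk, hiso]; exact hst
    have h2 : k s - k t = 0 := norm_eq_zero.mp h1
    exact sub_eq_zero.mp h2
  have key : ∀ n : ℕ, (∀ x y : G, ‖H n x - H n y‖ = ‖T x - T y‖) ∧
      (∀ x : G, H n (ρ (H n x)) = T x) ∧ (H n a = T b) ∧
      (‖H n m - T m‖ = 2 ^ n * ‖H 0 m - T m‖) := by
    intro n
    induction n with
    | zero =>
      refine ⟨?_, ?_, ?_, ?_⟩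
      · intro x y
        rw [hH0, hH0]
        have e1 : (T a + T b - T x) - (T a + T b - T y) = T y - T x := by abel
        rw [e1, norm_sub_rev]
      · intro x
        rw [hH0, hH0, hρ]
        abel
      · rw [hH0]; abel
      · simp
    | succ n ih =>
      obtain ⟨P1, P2, P3, P4⟩ := ih
      have P1' : ∀ x y : G, ‖H (n+1) x - H (n+1) y‖ = ‖T x - T y‖ := by
        intro x y
        rw [hHS, hHS]
        calc ‖H n (a + b - ρ (H n x)) - H n (a + b - ρ (H n y))‖
            = ‖T (a + b - ρ (H n x)) - T (a + b - ρ (H n y))‖ := P1 _ _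
          _ = ‖T ((a + b - ρ (H n x)) - (a + b - ρ (H n y)))‖ := hiso _ _
          _ = ‖T (ρ (H n y) - ρ (H n x))‖ := by
              congr 1; abel_nf
          _ = ‖T (ρ (H n y)) - T (ρ (H n x))‖ := (hiso _ _).symm
          _ = ‖H n y - H n x‖ := by rw [hρ, hρ]
          _ = ‖H n x - H n y‖ := norm_sub_rev _ _
          _ = ‖T x - T y‖ := P1 _ _
      refine ⟨P1', ?_, ?_, ?_⟩
      · -- involution property
        intro x
        set q : G := a + b - ρ (H n x) with hq
        have e1 : H (n+1) x = H n q := hHS n x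
        rw [e1, hHS]
        rw [P2 q]
        have e2 : H n (a + b - ρ (T q)) = H n (a + b - q) := by
          apply heq (H n) P1
          have e3 : (a + b - ρ (T q)) - (a + b - q) = q - ρ (T q) := by abel
          rw [e3, ← hiso, hρ, sub_self, norm_zero]
        rw [e2]
        have e4 : a + b - q = ρ (H n x) := by rw [hq]; abel
        rw [e4, P2]
      · -- swaps a and b
        rw [hHS, P3]
        have e1 : H n (a + b - ρ (T b)) = H n a := by
          apply heq (H n) P1
          have e2 : (a + b - ρ (T b)) - a = b - ρ (T b) := by abel
          rw [e2, ← hiso, hρ, sub_self, norm_zero]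
        rw [e1, P3]
      · -- doubling of the displacement of the midpoint
        rw [hHS]
        set r : G := ρ (H n m) with hr
        have e1 : H n r = T m := P2 m
        calc ‖H n (a + b - r) - T m‖
            = ‖H n (a + b - r) - H n r‖ := by rw [e1]
          _ = ‖T (a + b - r) - T r‖ := P1 _ _
          _ = ‖T ((a + b - r) - r)‖ := hiso _ _
          _ = ‖T ((m - r) + (m - r))‖ := by rw [← hm]; congr 1; abel
          _ = ‖T (m - r) + T (m - r)‖ := h _ _
          _ = 2 * ‖T (m - r)‖ := hdbl _
          _ = 2 * ‖T m - T r‖ := by rw [hiso]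
          _ = 2 * ‖T m - H n m‖ := by rw [hr, hρ]
          _ = 2 * ‖H n m - T m‖ := by rw [norm_sub_rev]
          _ = 2 ^ (n+1) * ‖H 0 m - T m‖ := by rw [P4]; ring
  -- boundedness and conclusion
  set δ : ℝ := ‖H 0 m - T m‖ with hδdef
  set C : ℝ := ‖T m - T a‖ + ‖T b - T m‖ with hCdef
  have bound : ∀ n : ℕ, 2 ^ n * δ ≤ C := by
    intro n
    obtain ⟨P1, P2, P3, P4⟩ := key n
    calc 2 ^ n * δ = ‖H n m - T m‖ := P4.symm
      _ ≤ ‖H n m - H n a‖ + ‖H n a - T m‖ := by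
          have := norm_add_le (H n m - H n a) (H n a - T m)
          simpa using this
      _ = ‖T m - T a‖ + ‖T b - T m‖ := by rw [P1, P3]
      _ = C := rfl
  have hδ0 : δ = 0 := by
    by_contra hne
    have hpos : 0 < δ := lt_of_le_of_ne (norm_nonneg _) (Ne.symm hne)
    obtain ⟨n, hn⟩ := exists_nat_gt (C / δ)
    have h2 : (n : ℝ) ≤ 2 ^ n := by
      have := Nat.lt_two_pow_self (n := n)
      exact_mod_cast this.le
    have h3 : C / δ < 2 ^ n := lt_of_lt_of_le hn h2
    have h4 : C < 2 ^ n * δ := by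
      rw [div_lt_iff₀ hpos] at h3
      linarith
    have h5 := bound n
    linarith
  have h6 : H 0 m = T m := by
    have := norm_eq_zero.mp hδ0
    exact sub_eq_zero.mp this
  rw [hH0] at h6
  rw [sub_eq_iff_eq_add] at h6
  rw [h6]

variable {X Y : Type*} [TopologicalSpace X] [CompactSpace X] [T2Space X]
  [TopologicalSpace Y] [CompactSpace Y] [T2Space Y]

theorem stmt0 (T : C(X, ℂ) → C(Y, ℂ)) (hsurj : Function.Surjective T)
    (h : ∀ f g : C(X, ℂ), ‖T (f + g)‖ = ‖T f + T g‖) :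
    ∀ f g : C(X, ℂ), T (f + g) = T f + T g := by
  intro f g
  have hm1 : (2⁻¹ : ℂ) • (f + g) + (2⁻¹ : ℂ) • (f + g) = f + g := by
    rw [← add_smul]
    norm_num
  have h1 := tabor_mid T hsurj h f g ((2⁻¹ : ℂ) • (f + g)) hm1
  have hm2 : (2⁻¹ : ℂ) • (f + g) + (2⁻¹ : ℂ) • (f + g) = (f + g) + 0 := by
    rw [add_zero]; exact hm1
  have h2 := tabor_mid T hsurj h (f + g) 0 ((2⁻¹ : ℂ) • (f + g)) hm2
  have hT0 : T 0 = 0 := by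
    have h00 : ‖T 0‖ = ‖T 0 + T 0‖ := by simpa using h 0 0
    have hd : ‖T 0 + T 0‖ = 2 * ‖T 0‖ := by
      rw [← two_smul ℝ (T 0), norm_smul]; simp
    rw [hd] at h00
    have : ‖T 0‖ = 0 := by linarith
    simpa using this
  rw [hT0, add_zero] at h2
  exact h2.trans h1.symm
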